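/- For every $p \geq 2$, the function $h_2(x) = \int_{-1}^{1} |x^{1/2} + u|^p\, du$ is convex on $[0,\infty)$; for every $p \in [1,2]$, $h_2$ is concave on $[0,\infty)$. -/

import Mathlib

open Real Set intervalIntegral


-- g(y) = y * |y|^p, derivative (p+1)|y|^p
lemma gderiv {p : ℝ} (hp : 0 < p) (y : ℝ) :
    HasDerivAt (fun y : ℝ => y * |y| ^ p) ((p + 1) * |y| ^ p) y := by
  rcases lt_trichotomy y 0 with hy | rfl | hy
  · have h1 : HasDerivAt (fun y : ℝ => -((-y) ^ (p + 1))) ((p + 1) * (-y) ^ p) y := by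
      have h2 : HasDerivAt (fun y : ℝ => (-y) ^ (p + 1))
          ((p + 1) * (-y) ^ (p + 1 - 1) * (-1)) y :=
        (Real.hasDerivAt_rpow_const (x := -y) (p := p + 1)
          (Or.inl (by linarith))).comp y (hasDerivAt_neg y)
      have := h2.neg
      exact this.congr_deriv (by ring_nf)
    have heq : (fun y : ℝ => y * |y| ^ p) =ᶠ[nhds y] (fun y : ℝ => -((-y) ^ (p + 1))) := by
      filter_upwards [Iio_mem_nhds hy] with z hz
      have hz' : (0:ℝ) < -z := by simpa using hz
      rw [abs_of_neg hz, Real.rpow_add_one (by linarith)]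
      ring
    have := h1.congr_of_eventuallyEq heq
    simpa [abs_of_neg hy] using this
  · rw [hasDerivAt_iff_tendsto_slope]
    have : (fun z : ℝ => |z| ^ p) =ᶠ[nhdsWithin 0 {(0:ℝ)}ᶜ] slope (fun y : ℝ => y * |y| ^ p) 0 := by
      filter_upwards [self_mem_nhdsWithin] with z hz
      have hz' : z ≠ 0 := hz
      simp only [slope_def_field, mul_zero, sub_zero, abs_zero,
        Real.zero_rpow hp.ne', zero_mul]
      exact (mul_div_cancel_left₀ _ hz').symm
    refine Filter.Tendsto.congr' this ?_
    have hc : ContinuousAt (fun z : ℝ => |z| ^ p) 0 := by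
      have : ContinuousAt (fun x : ℝ => x ^ p) (|(0:ℝ)|) :=
        Real.continuousAt_rpow_const _ _ (Or.inr hp.le)
      exact this.comp continuous_abs.continuousAt
    have := hc.continuousWithinAt (s := {(0:ℝ)}ᶜ)
    simpa [ContinuousWithinAt, Real.zero_rpow hp.ne', abs_zero] using this
  · have h1 : HasDerivAt (fun y : ℝ => y ^ (p + 1)) ((p + 1) * y ^ p) y := by
      have := Real.hasDerivAt_rpow_const (x := y) (p := p + 1) (Or.inl hy.ne')
      simpa using this
    have heq : (fun y : ℝ => y * |y| ^ p) =ᶠ[nhds y] (fun y : ℝ => y ^ (p + 1)) := by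
      filter_upwards [Ioi_mem_nhds hy] with z hz
      rw [abs_of_pos hz, Real.rpow_add_one (ne_of_gt hz)]
      ring
    have := h1.congr_of_eventuallyEq heq
    simpa [abs_of_pos hy] using this

lemma integral_eq {p : ℝ} (hp : 1 ≤ p) {t : ℝ} (ht : 0 ≤ t) :
    (∫ u in (-1:ℝ)..1, |t + u| ^ p)
      = ((1 + t) ^ (p + 1) - (t - 1) * |t - 1| ^ p) / (p + 1) := by
  have hp0 : (0:ℝ) < p := lt_of_lt_of_le one_pos hp
  have hder : ∀ u ∈ Set.uIcc (-1:ℝ) 1,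
      HasDerivAt (fun u : ℝ => (t + u) * |t + u| ^ p / (p + 1)) (|t + u| ^ p) u := by
    intro u _
    have h1 : HasDerivAt (fun u : ℝ => (t + u) * |t + u| ^ p)
        ((p + 1) * |t + u| ^ p) u := by
      have := (gderiv hp0 (t + u)).comp u ((hasDerivAt_id u).const_add t)
      simpa [Function.comp_def] using this
    have h2 := h1.div_const (p + 1)
    exact h2.congr_deriv (mul_div_cancel_left₀ _ (by linarith))
  have hcont : Continuous (fun u : ℝ => |t + u| ^ p) :=
    (Real.continuous_rpow_const hp0.le).comp ((continuous_const.add continuous_id).abs)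
  rw [intervalIntegral.integral_eq_sub_of_hasDerivAt hder
    (hcont.intervalIntegrable _ _)]
  have h1 : (0:ℝ) < t + 1 := by linarith
  rw [abs_of_pos h1, show (1 + t : ℝ) = t + 1 from by ring,
    Real.rpow_add_one h1.ne', show (t + -1 : ℝ) = t - 1 from by ring]
  ring

section keyineq
variable {p : ℝ}

private lemma hasDerivAt_G (hx : (0:ℝ) < x) :
    HasDerivAt (fun x : ℝ => (p-2) * x ^ (p-1) - (p-1) * x ^ (p-2) + 1)
      ((p-1) * (p-2) * (x ^ (p-2) - x ^ (p-3))) x := by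
  have h1 := (Real.hasDerivAt_rpow_const (x := x) (p := p-1) (Or.inl hx.ne')).const_mul (p-2)
  have h2 := (Real.hasDerivAt_rpow_const (x := x) (p := p-2) (Or.inl hx.ne')).const_mul (p-1)
  have h := (h1.sub h2).add_const 1
  refine h.congr_deriv (Eq.symm ?_)
  rw [show p-1-1 = p-2 by ring, show p-2-1 = p-3 by ring]
  ring

private lemma hasDerivAt_F (hx : (0:ℝ) < x) :
    HasDerivAt (fun x : ℝ => (p-2) * x ^ p - p * x ^ (p-1) + p * x - (p-2))
      (p * ((p-2) * x ^ (p-1) - (p-1) * x ^ (p-2) + 1)) x := by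
  have h1 := (Real.hasDerivAt_rpow_const (x := x) (p := p) (Or.inl hx.ne')).const_mul (p-2)
  have h2 := (Real.hasDerivAt_rpow_const (x := x) (p := p-1) (Or.inl hx.ne')).const_mul p
  have h3 := (hasDerivAt_id x).const_mul p
  have h := ((h1.sub h2).add h3).sub_const (p-2)
  refine h.congr_deriv (Eq.symm ?_)
  rw [show p-1-1 = p-2 by ring]
  ring

private lemma G_one : (p-2) * (1:ℝ) ^ (p-1) - (p-1) * (1:ℝ) ^ (p-2) + 1 = 0 := by
  rw [Real.one_rpow, Real.one_rpow]; ring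

lemma G_nonneg (hp : 2 ≤ p) {x : ℝ} (hx : 1 ≤ x) :
    0 ≤ (p-2) * x ^ (p-1) - (p-1) * x ^ (p-2) + 1 := by
  set G : ℝ → ℝ := fun x => (p-2) * x ^ (p-1) - (p-1) * x ^ (p-2) + 1 with hG
  have hmono : MonotoneOn G (Set.Ici 1) := by
    apply monotoneOn_of_deriv_nonneg (convex_Ici 1)
    · intro y hy
      exact (hasDerivAt_G (lt_of_lt_of_le one_pos hy)).continuousAt.continuousWithinAt
    · intro y hy
      rw [interior_Ici] at hy
      exact (hasDerivAt_G (lt_trans one_pos hy)).differentiableAt.differentiableWithinAt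
    · intro y hy
      rw [interior_Ici] at hy
      rw [(hasDerivAt_G (lt_trans one_pos hy)).deriv]
      have h1 : y ^ (p-3) ≤ y ^ (p-2) :=
        Real.rpow_le_rpow_of_exponent_le hy.le (by linarith)
      have h2 : (0:ℝ) ≤ (p-1) * (p-2) := by nlinarith
      nlinarith
  have := hmono (Set.self_mem_Ici) hx hx
  rw [hG] at this
  simp only [Real.one_rpow] at this
  linarith

lemma G_nonpos (hp1 : 1 ≤ p) (hp2 : p ≤ 2) {x : ℝ} (hx : 1 ≤ x) :
    (p-2) * x ^ (p-1) - (p-1) * x ^ (p-2) + 1 ≤ 0 := by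
  set G : ℝ → ℝ := fun x => (p-2) * x ^ (p-1) - (p-1) * x ^ (p-2) + 1 with hG
  have hmono : AntitoneOn G (Set.Ici 1) := by
    apply antitoneOn_of_deriv_nonpos (convex_Ici 1)
    · intro y hy
      exact (hasDerivAt_G (lt_of_lt_of_le one_pos hy)).continuousAt.continuousWithinAt
    · intro y hy
      rw [interior_Ici] at hy
      exact (hasDerivAt_G (lt_trans one_pos hy)).differentiableAt.differentiableWithinAt
    · intro y hy
      rw [interior_Ici] at hy
      rw [(hasDerivAt_G (lt_trans one_pos hy)).deriv]
      have h1 : y ^ (p-3) ≤ y ^ (p-2) :=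
        Real.rpow_le_rpow_of_exponent_le hy.le (by linarith)
      have h2 : (p-1) * (p-2) ≤ 0 := by nlinarith
      nlinarith
  have := hmono (Set.self_mem_Ici) hx hx
  rw [hG] at this
  simp only [Real.one_rpow] at this
  linarith

lemma F_nonneg (hp : 2 ≤ p) {x : ℝ} (hx : 1 ≤ x) :
    0 ≤ (p-2) * x ^ p - p * x ^ (p-1) + p * x - (p-2) := by
  set F : ℝ → ℝ := fun x => (p-2) * x ^ p - p * x ^ (p-1) + p * x - (p-2) with hF
  have hmono : MonotoneOn F (Set.Ici 1) := by
    apply monotoneOn_of_deriv_nonneg (convex_Ici 1)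
    · intro y hy
      exact (hasDerivAt_F (lt_of_lt_of_le one_pos hy)).continuousAt.continuousWithinAt
    · intro y hy
      rw [interior_Ici] at hy
      exact (hasDerivAt_F (lt_trans one_pos hy)).differentiableAt.differentiableWithinAt
    · intro y hy
      rw [interior_Ici] at hy
      rw [(hasDerivAt_F (lt_trans one_pos hy)).deriv]
      have := G_nonneg hp hy.le
      nlinarith
  have := hmono (Set.self_mem_Ici) hx hx
  rw [hF] at this
  simp only [Real.one_rpow] at this
  linarith [this]

lemma F_nonpos (hp1 : 1 ≤ p) (hp2 : p ≤ 2) {x : ℝ} (hx : 1 ≤ x) :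
    (p-2) * x ^ p - p * x ^ (p-1) + p * x - (p-2) ≤ 0 := by
  set F : ℝ → ℝ := fun x => (p-2) * x ^ p - p * x ^ (p-1) + p * x - (p-2) with hF
  have hmono : AntitoneOn F (Set.Ici 1) := by
    apply antitoneOn_of_deriv_nonpos (convex_Ici 1)
    · intro y hy
      exact (hasDerivAt_F (lt_of_lt_of_le one_pos hy)).continuousAt.continuousWithinAt
    · intro y hy
      rw [interior_Ici] at hy
      exact (hasDerivAt_F (lt_trans one_pos hy)).differentiableAt.differentiableWithinAt
    · intro y hy
      rw [interior_Ici] at hy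
      rw [(hasDerivAt_F (lt_trans one_pos hy)).deriv]
      have := G_nonpos hp1 hp2 hy.le
      nlinarith
  have := hmono (Set.self_mem_Ici) hx hx
  rw [hF] at this
  simp only [Real.one_rpow] at this
  linarith [this]

end keyineq

lemma K_ge {p a b : ℝ} (hp : 2 ≤ p) (hb : 0 < b) (hab : b ≤ a) :
    p * (a ^ (p-1) * b - a * b ^ (p-1)) ≤ (p-2) * (a ^ p - b ^ p) := by
  have ha : 0 < a := lt_of_lt_of_le hb hab
  set x := a / b with hx
  have hx1 : 1 ≤ x := (one_le_div hb).mpr hab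
  have hx0 : 0 ≤ x := by linarith
  have hab' : a = x * b := (div_mul_cancel₀ a hb.ne').symm
  have e1 : a ^ p = x ^ p * b ^ p := by rw [hab', Real.mul_rpow hx0 hb.le]
  have e2 : a ^ (p-1) = x ^ (p-1) * b ^ (p-1) := by rw [hab', Real.mul_rpow hx0 hb.le]
  have e3 : b ^ p = b ^ (p-1) * b := by
    rw [← Real.rpow_add_one hb.ne' (p-1)]; ring_nf
  have hF := F_nonneg hp hx1
  have hbp : (0:ℝ) ≤ b ^ p := Real.rpow_nonneg hb.le p
  have key : 0 ≤ b ^ p * ((p-2) * x ^ p - p * x ^ (p-1) + p * x - (p-2)) :=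
    mul_nonneg hbp hF
  rw [e1, e2, hab']
  calc p * (x ^ (p-1) * b ^ (p-1) * b - x * b * b ^ (p-1))
      = b ^ p * (p * x ^ (p-1) - p * x) := by rw [e3]; ring
    _ ≤ b ^ p * ((p-2) * x ^ p - (p-2)) := by nlinarith
    _ = (p-2) * (x ^ p * b ^ p - b ^ p) := by ring

lemma K_le {p a b : ℝ} (hp1 : 1 ≤ p) (hp2 : p ≤ 2) (hb : 0 < b) (hab : b ≤ a) :
    (p-2) * (a ^ p - b ^ p) ≤ p * (a ^ (p-1) * b - a * b ^ (p-1)) := by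
  have ha : 0 < a := lt_of_lt_of_le hb hab
  set x := a / b with hx
  have hx1 : 1 ≤ x := (one_le_div hb).mpr hab
  have hx0 : 0 ≤ x := by linarith
  have hab' : a = x * b := (div_mul_cancel₀ a hb.ne').symm
  have e1 : a ^ p = x ^ p * b ^ p := by rw [hab', Real.mul_rpow hx0 hb.le]
  have e2 : a ^ (p-1) = x ^ (p-1) * b ^ (p-1) := by rw [hab', Real.mul_rpow hx0 hb.le]
  have e3 : b ^ p = b ^ (p-1) * b := by
    rw [← Real.rpow_add_one hb.ne' (p-1)]; ring_nf
  have hF := F_nonpos hp1 hp2 hx1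
  have hbp : (0:ℝ) ≤ b ^ p := Real.rpow_nonneg hb.le p
  have key : b ^ p * ((p-2) * x ^ p - p * x ^ (p-1) + p * x - (p-2)) ≤ 0 :=
    mul_nonpos_of_nonneg_of_nonpos hbp hF
  rw [e1, e2, hab']
  calc (p-2) * (x ^ p * b ^ p - b ^ p)
      = b ^ p * ((p-2) * x ^ p - (p-2)) := by ring
    _ ≤ b ^ p * (p * x ^ (p-1) - p * x) := by nlinarith
    _ = p * (x ^ (p-1) * b ^ (p-1) * b - x * b * b ^ (p-1)) := by rw [e3]; ring

lemma numA_nonneg {p a b : ℝ} (hp : 2 ≤ p) (hb : 0 < b) (hab : b ≤ a) :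
    0 ≤ (p * a ^ (p-1) + p * b ^ (p-1)) * (a - b) - (a ^ p - b ^ p) * 2 := by
  have ha : 0 < a := lt_of_lt_of_le hb hab
  have hK := K_ge hp hb hab
  have ea : a ^ p = a ^ (p-1) * a := by rw [← Real.rpow_add_one ha.ne' (p-1)]; ring_nf
  have eb : b ^ p = b ^ (p-1) * b := by rw [← Real.rpow_add_one hb.ne' (p-1)]; ring_nf
  rw [ea, eb] at hK ⊢
  linarith

lemma numA_nonpos {p a b : ℝ} (hp1 : 1 ≤ p) (hp2 : p ≤ 2) (hb : 0 < b) (hab : b ≤ a) :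
    (p * a ^ (p-1) + p * b ^ (p-1)) * (a - b) - (a ^ p - b ^ p) * 2 ≤ 0 := by
  have ha : 0 < a := lt_of_lt_of_le hb hab
  have hK := K_le hp1 hp2 hb hab
  have ea : a ^ p = a ^ (p-1) * a := by rw [← Real.rpow_add_one ha.ne' (p-1)]; ring_nf
  have eb : b ^ p = b ^ (p-1) * b := by rw [← Real.rpow_add_one hb.ne' (p-1)]; ring_nf
  rw [ea, eb] at hK ⊢
  linarith

lemma numB_nonneg {p a b : ℝ} (hp : 2 ≤ p) (hb : 0 < b) (hab : b ≤ a) :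
    0 ≤ (p * a ^ (p-1) - p * b ^ (p-1)) * (a + b) - (a ^ p - b ^ p) * 2 := by
  have ha : 0 < a := lt_of_lt_of_le hb hab
  have ea : a ^ p = a ^ (p-1) * a := by rw [← Real.rpow_add_one ha.ne' (p-1)]; ring_nf
  have eb : b ^ p = b ^ (p-1) * b := by rw [← Real.rpow_add_one hb.ne' (p-1)]; ring_nf
  have ea2 : a ^ (p-1) = a ^ (p-2) * a := by rw [← Real.rpow_add_one ha.ne' (p-2)]; ring_nf
  have eb2 : b ^ (p-1) = b ^ (p-2) * b := by rw [← Real.rpow_add_one hb.ne' (p-2)]; ring_nf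
  have h1 : b ^ p ≤ a ^ p := Real.rpow_le_rpow hb.le hab (by linarith)
  have h2 : b ^ (p-2) ≤ a ^ (p-2) := Real.rpow_le_rpow hb.le hab (by linarith)
  have h3 : a * b ^ (p-1) ≤ a ^ (p-1) * b := by
    rw [ea2, eb2]
    nlinarith [mul_le_mul_of_nonneg_left h2 (mul_nonneg ha.le hb.le)]
  have k1 : 0 ≤ (p-2) * (a ^ (p-1) * a - b ^ (p-1) * b) :=
    mul_nonneg (by linarith) (by rw [← ea, ← eb]; linarith)
  have k2 : 0 ≤ p * (a ^ (p-1) * b - a * b ^ (p-1)) :=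
    mul_nonneg (by linarith) (by linarith)
  rw [ea, eb]
  linarith

lemma numB_nonpos {p a b : ℝ} (hp1 : 1 ≤ p) (hp2 : p ≤ 2) (hb : 0 < b) (hab : b ≤ a) :
    (p * a ^ (p-1) - p * b ^ (p-1)) * (a + b) - (a ^ p - b ^ p) * 2 ≤ 0 := by
  have ha : 0 < a := lt_of_lt_of_le hb hab
  have ea : a ^ p = a ^ (p-1) * a := by rw [← Real.rpow_add_one ha.ne' (p-1)]; ring_nf
  have eb : b ^ p = b ^ (p-1) * b := by rw [← Real.rpow_add_one hb.ne' (p-1)]; ring_nf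
  have ea2 : a ^ (p-1) = a ^ (p-2) * a := by rw [← Real.rpow_add_one ha.ne' (p-2)]; ring_nf
  have eb2 : b ^ (p-1) = b ^ (p-2) * b := by rw [← Real.rpow_add_one hb.ne' (p-2)]; ring_nf
  have h1 : b ^ p ≤ a ^ p := Real.rpow_le_rpow hb.le hab (by linarith)
  have h2 : a ^ (p-2) ≤ b ^ (p-2) :=
    Real.rpow_le_rpow_of_nonpos hb hab (by linarith)
  have h3 : a ^ (p-1) * b ≤ a * b ^ (p-1) := by
    rw [ea2, eb2]
    nlinarith [mul_le_mul_of_nonneg_left h2 (mul_nonneg ha.le hb.le)]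
  have k1 : (p-2) * (a ^ (p-1) * a - b ^ (p-1) * b) ≤ 0 :=
    mul_nonpos_of_nonpos_of_nonneg (by linarith) (by rw [← ea, ← eb]; linarith)
  have k2 : p * (a ^ (p-1) * b - a * b ^ (p-1)) ≤ 0 :=
    mul_nonpos_of_nonneg_of_nonpos (by linarith) (by linarith)
  rw [ea, eb]
  linarith

noncomputable def psi (p : ℝ) : ℝ → ℝ := fun t => ((1+t) ^ p - |t-1| ^ p) / (2*t)

lemma psi_cont {p : ℝ} (hp : 0 < p) : ContinuousOn (psi p) (Set.Ioi 0) := by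
  apply ContinuousOn.div
  · apply Continuous.continuousOn
    exact ((Real.continuous_rpow_const hp.le).comp (continuous_const.add continuous_id)).sub
      ((Real.continuous_rpow_const hp.le).comp (continuous_id.sub continuous_const).abs)
  · exact (continuous_const.mul continuous_id).continuousOn
  · intro t ht
    have : (0:ℝ) < t := ht
    positivity

lemma psi_deriv_lo {p t : ℝ} (ht0 : 0 < t) (ht1 : t < 1) :
    HasDerivAt (psi p)
      (((p * (1+t) ^ (p-1) + p * (1-t) ^ (p-1)) * (2*t) - ((1+t) ^ p - (1-t) ^ p) * 2)
        / (2*t)^2) t := by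
  have h1 : HasDerivAt (fun t : ℝ => (1+t) ^ p) (p * (1+t) ^ (p-1)) t := by
    have := (Real.hasDerivAt_rpow_const (x := 1+t) (p := p)
      (Or.inl (by linarith : (1+t:ℝ) ≠ 0))).comp t ((hasDerivAt_id t).const_add 1)
    simpa [Function.comp_def] using this
  have h2 : HasDerivAt (fun t : ℝ => (1-t) ^ p) (-(p * (1-t) ^ (p-1))) t := by
    have := (Real.hasDerivAt_rpow_const (x := 1-t) (p := p)
      (Or.inl (by linarith : (1-t:ℝ) ≠ 0))).comp t ((hasDerivAt_id t).const_sub 1)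
    simpa [Function.comp_def] using this
  have hden : HasDerivAt (fun t : ℝ => 2*t) 2 t := by
    simpa using (hasDerivAt_id t).const_mul 2
  have hdiv := (h1.sub h2).div hden (by positivity : 2*t ≠ 0)
  have heq : psi p =ᶠ[nhds t] fun t : ℝ => ((1+t) ^ p - (1-t) ^ p) / (2*t) := by
    filter_upwards [Iio_mem_nhds ht1] with z hz
    have : |z - 1| = 1 - z := by
      rw [abs_sub_comm, abs_of_nonneg (by simpa using le_of_lt hz)]
    rw [psi, this]
  have := hdiv.congr_of_eventuallyEq heq
  exact this.congr_deriv (by simp only [Pi.sub_apply]; ring)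

lemma psi_deriv_hi {p t : ℝ} (ht1 : 1 < t) :
    HasDerivAt (psi p)
      (((p * (1+t) ^ (p-1) - p * (t-1) ^ (p-1)) * (2*t) - ((1+t) ^ p - (t-1) ^ p) * 2)
        / (2*t)^2) t := by
  have h1 : HasDerivAt (fun t : ℝ => (1+t) ^ p) (p * (1+t) ^ (p-1)) t := by
    have := (Real.hasDerivAt_rpow_const (x := 1+t) (p := p)
      (Or.inl (by linarith : (1+t:ℝ) ≠ 0))).comp t ((hasDerivAt_id t).const_add 1)
    simpa [Function.comp_def] using this
  have h2 : HasDerivAt (fun t : ℝ => (t-1) ^ p) (p * (t-1) ^ (p-1)) t := by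
    have := (Real.hasDerivAt_rpow_const (x := t-1) (p := p)
      (Or.inl (by linarith : (t-1:ℝ) ≠ 0))).comp t ((hasDerivAt_id t).sub_const 1)
    simpa [Function.comp_def] using this
  have hden : HasDerivAt (fun t : ℝ => 2*t) 2 t := by
    simpa using (hasDerivAt_id t).const_mul 2
  have hdiv := (h1.sub h2).div hden (by positivity : 2*t ≠ 0)
  have heq : psi p =ᶠ[nhds t] fun t : ℝ => ((1+t) ^ p - (t-1) ^ p) / (2*t) := by
    filter_upwards [Ioi_mem_nhds ht1] with z hz
    have : |z - 1| = z - 1 := abs_of_pos (by simpa [sub_pos] using hz)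
    rw [psi, this]
  exact hdiv.congr_of_eventuallyEq heq

lemma psi_monoA {p : ℝ} (hp : 2 ≤ p) : MonotoneOn (psi p) (Set.Ioc 0 1) := by
  have hp0 : (0:ℝ) < p := by linarith
  apply monotoneOn_of_deriv_nonneg (convex_Ioc 0 1)
    (psi_cont hp0 |>.mono (fun x hx => hx.1))
  · rw [interior_Ioc]
    intro t ht
    exact (psi_deriv_lo ht.1 ht.2).differentiableAt.differentiableWithinAt
  · rw [interior_Ioc]
    intro t ht
    obtain ⟨hta, htb⟩ := ht
    rw [(psi_deriv_lo hta htb).deriv]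
    apply div_nonneg _ (by positivity)
    have h := numA_nonneg hp (by linarith : (0:ℝ) < 1 - t) (by linarith : (1-t:ℝ) ≤ 1+t)
    rw [show (1+t) - (1-t) = 2*t by ring] at h
    linarith

lemma psi_antiA {p : ℝ} (hp1 : 1 ≤ p) (hp2 : p ≤ 2) : AntitoneOn (psi p) (Set.Ioc 0 1) := by
  have hp0 : (0:ℝ) < p := by linarith
  apply antitoneOn_of_deriv_nonpos (convex_Ioc 0 1)
    (psi_cont hp0 |>.mono (fun x hx => hx.1))
  · rw [interior_Ioc]
    intro t ht
    exact (psi_deriv_lo ht.1 ht.2).differentiableAt.differentiableWithinAt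
  · rw [interior_Ioc]
    intro t ht
    obtain ⟨hta, htb⟩ := ht
    rw [(psi_deriv_lo hta htb).deriv]
    apply div_nonpos_of_nonpos_of_nonneg _ (by positivity)
    have h := numA_nonpos hp1 hp2 (by linarith : (0:ℝ) < 1 - t) (by linarith : (1-t:ℝ) ≤ 1+t)
    rw [show (1+t) - (1-t) = 2*t by ring] at h
    linarith

lemma psi_monoB {p : ℝ} (hp : 2 ≤ p) : MonotoneOn (psi p) (Set.Ici 1) := by
  have hp0 : (0:ℝ) < p := by linarith
  apply monotoneOn_of_deriv_nonneg (convex_Ici 1)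
    (psi_cont hp0 |>.mono (fun x hx => show (0:ℝ) < x from lt_of_lt_of_le one_pos hx))
  · rw [interior_Ici]
    intro t ht
    exact (psi_deriv_hi ht).differentiableAt.differentiableWithinAt
  · rw [interior_Ici]
    intro t ht
    have ht' : 1 < t := ht
    rw [(psi_deriv_hi ht').deriv]
    apply div_nonneg _ (by positivity)
    have h := numB_nonneg hp (by linarith : (0:ℝ) < t - 1) (by linarith : (t-1:ℝ) ≤ 1+t)
    rw [show (1+t) + (t-1) = 2*t by ring] at h
    linarith

lemma psi_antiB {p : ℝ} (hp1 : 1 ≤ p) (hp2 : p ≤ 2) : AntitoneOn (psi p) (Set.Ici 1) := by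
  have hp0 : (0:ℝ) < p := by linarith
  apply antitoneOn_of_deriv_nonpos (convex_Ici 1)
    (psi_cont hp0 |>.mono (fun x hx => show (0:ℝ) < x from lt_of_lt_of_le one_pos hx))
  · rw [interior_Ici]
    intro t ht
    exact (psi_deriv_hi ht).differentiableAt.differentiableWithinAt
  · rw [interior_Ici]
    intro t ht
    have ht' : 1 < t := ht
    rw [(psi_deriv_hi ht').deriv]
    apply div_nonpos_of_nonpos_of_nonneg _ (by positivity)
    have h := numB_nonpos hp1 hp2 (by linarith : (0:ℝ) < t - 1) (by linarith : (t-1:ℝ) ≤ 1+t)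
    rw [show (1+t) + (t-1) = 2*t by ring] at h
    linarith

lemma psi_mono {p : ℝ} (hp : 2 ≤ p) : MonotoneOn (psi p) (Set.Ioi 0) := by
  intro s hs t ht hst
  have hs0 : (0:ℝ) < s := hs
  rcases le_or_gt t 1 with ht1 | ht1
  · exact psi_monoA hp ⟨hs0, hst.trans ht1⟩ ⟨lt_of_lt_of_le hs0 hst, ht1⟩ hst
  · rcases le_or_gt s 1 with hs1 | hs1
    · exact le_trans (psi_monoA hp ⟨hs0, hs1⟩ ⟨one_pos, le_refl 1⟩ hs1)
        (psi_monoB hp Set.self_mem_Ici (le_of_lt ht1) (le_of_lt ht1))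
    · exact psi_monoB hp hs1.le (hs1.trans_le hst).le hst

lemma psi_anti {p : ℝ} (hp1 : 1 ≤ p) (hp2 : p ≤ 2) : AntitoneOn (psi p) (Set.Ioi 0) := by
  intro s hs t ht hst
  have hs0 : (0:ℝ) < s := hs
  rcases le_or_gt t 1 with ht1 | ht1
  · exact psi_antiA hp1 hp2 ⟨hs0, hst.trans ht1⟩ ⟨lt_of_lt_of_le hs0 hst, ht1⟩ hst
  · rcases le_or_gt s 1 with hs1 | hs1
    · exact le_trans (psi_antiB hp1 hp2 Set.self_mem_Ici (le_of_lt ht1) (le_of_lt ht1))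
        (psi_antiA hp1 hp2 ⟨hs0, hs1⟩ ⟨one_pos, le_refl 1⟩ hs1)
    · exact psi_antiB hp1 hp2 hs1.le (hs1.trans_le hst).le hst

noncomputable def Phi (p : ℝ) : ℝ → ℝ := fun x =>
  ((1 + Real.sqrt x) ^ (p+1) - (Real.sqrt x - 1) * |Real.sqrt x - 1| ^ p) / (p+1)

lemma Phi_hasDeriv {p x : ℝ} (hp : 1 ≤ p) (hx : 0 < x) :
    HasDerivAt (Phi p) (psi p (Real.sqrt x)) x := by
  have hp0 : (0:ℝ) < p := by linarith
  set t := Real.sqrt x with htdef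
  have ht : 0 < t := Real.sqrt_pos.mpr hx
  have c1 : HasDerivAt (fun t : ℝ => (1+t) ^ (p+1)) ((p+1) * (1+t) ^ p) t := by
    have h := (Real.hasDerivAt_rpow_const (x := 1+t) (p := p+1)
      (Or.inl (by linarith : (1+t:ℝ) ≠ 0))).comp t ((hasDerivAt_id t).const_add 1)
    have he : p + 1 - 1 = p := by ring
    rw [he] at h
    simpa [Function.comp_def] using h
  have c2 : HasDerivAt (fun t : ℝ => (t-1) * |t-1| ^ p) ((p+1) * |t-1| ^ p) t := by
    have h := (gderiv hp0 (t-1)).comp t ((hasDerivAt_id t).sub_const 1)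
    simpa [Function.comp_def] using h
  have hG := (c1.sub c2).div_const (p+1)
  have hsq : HasDerivAt Real.sqrt (1 / (2 * Real.sqrt x)) x := Real.hasDerivAt_sqrt hx.ne'
  have hfinal := hG.comp x hsq
  have : Phi p = (fun t : ℝ => ((1+t) ^ (p+1) - (t-1) * |t-1| ^ p) / (p+1)) ∘ Real.sqrt := rfl
  rw [this]
  refine hfinal.congr_deriv (Eq.symm ?_)
  rw [psi]
  rw [← htdef]
  field_simp

lemma Phi_cont {p : ℝ} (hp : 1 ≤ p) : Continuous (Phi p) := by
  have hp0 : (0:ℝ) ≤ p := by linarith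
  apply Continuous.div_const
  exact ((Real.continuous_rpow_const (by linarith)).comp
      (continuous_const.add Real.continuous_sqrt)).sub
    ((Real.continuous_sqrt.sub continuous_const).mul
      ((Real.continuous_rpow_const hp0).comp (Real.continuous_sqrt.sub continuous_const).abs))

lemma Phi_convex {p : ℝ} (hp : 2 ≤ p) : ConvexOn ℝ (Set.Ici 0) (Phi p) := by
  have hp1 : (1:ℝ) ≤ p := by linarith
  apply MonotoneOn.convexOn_of_deriv (convex_Ici 0) (Phi_cont hp1).continuousOn
  · rw [interior_Ici]
    intro x hx
    exact (Phi_hasDeriv hp1 hx).differentiableAt.differentiableWithinAt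
  · rw [interior_Ici]
    intro x hx y hy hxy
    rw [(Phi_hasDeriv hp1 hx).deriv, (Phi_hasDeriv hp1 hy).deriv]
    exact psi_mono hp (Real.sqrt_pos.mpr hx) (Real.sqrt_pos.mpr hy) (Real.sqrt_le_sqrt hxy)

lemma Phi_concave {p : ℝ} (hp1 : 1 ≤ p) (hp2 : p ≤ 2) : ConcaveOn ℝ (Set.Ici 0) (Phi p) := by
  apply AntitoneOn.concaveOn_of_deriv (convex_Ici 0) (Phi_cont hp1).continuousOn
  · rw [interior_Ici]
    intro x hx
    exact (Phi_hasDeriv hp1 hx).differentiableAt.differentiableWithinAt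
  · rw [interior_Ici]
    intro x hx y hy hxy
    rw [(Phi_hasDeriv hp1 hx).deriv, (Phi_hasDeriv hp1 hy).deriv]
    exact psi_anti hp1 hp2 (Real.sqrt_pos.mpr hx) (Real.sqrt_pos.mpr hy) (Real.sqrt_le_sqrt hxy)

/-- The function `h₂(x) = ∫_{-1}^{1} |√x + u|^p du` is convex on `[0,∞)` for `p ≥ 2`
and concave on `[0,∞)` for `p ∈ [1,2]`. -/
theorem stmt_5 (p : ℝ)
    (h₂ : ℝ → ℝ) (hh₂ : ∀ x : ℝ, 0 ≤ x →
      h₂ x = ∫ u in (-1:ℝ)..1, |Real.sqrt x + u| ^ p) :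
    (2 ≤ p → ConvexOn ℝ (Set.Ici 0) h₂) ∧
    (1 ≤ p → p ≤ 2 → ConcaveOn ℝ (Set.Ici 0) h₂) := by
  constructor
  · intro hp
    have hp1 : (1:ℝ) ≤ p := by linarith
    have hEq : ∀ x ∈ Set.Ici (0:ℝ), h₂ x = Phi p x := by
      intro x hx
      rw [hh₂ x hx, integral_eq hp1 (Real.sqrt_nonneg x)]
      rfl
    obtain ⟨hc, hineq⟩ := Phi_convex hp
    refine ⟨hc, fun x hx y hy a b ha hb hab => ?_⟩
    rw [hEq x hx, hEq y hy, hEq _ (hc hx hy ha hb hab)]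
    exact hineq hx hy ha hb hab
  · intro hp1 hp2
    have hEq : ∀ x ∈ Set.Ici (0:ℝ), h₂ x = Phi p x := by
      intro x hx
      rw [hh₂ x hx, integral_eq hp1 (Real.sqrt_nonneg x)]
      rfl
    obtain ⟨hc, hineq⟩ := Phi_concave hp1 hp2
    refine ⟨hc, fun x hx y hy a b ha hb hab => ?_⟩
    rw [hEq x hx, hEq y hy, hEq _ (hc hx hy ha hb hab)]
    exact hineq hx hy ha hb hab
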